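/- For (b,g) ∈ {(1,1), (-1,1), (1,xy), (-1,xy)}, the Nichols algebra B(M⟨b,g⟩) is isomorphic to the polynomial algebra K[p] in one variable, and in particular infinite-dimensional; for (b,g) ∈ {(i,x), (-i,x), (i,y), (-i,y)}, the Nichols algebra B(M⟨b,g⟩) is isomorphic to K[p]/(p^2), and in particular has dimension 2 over K. -/

import Mathlib

open TensorProduct Coalgebra

noncomputable section

/-- The Kac–Paljutkin algebra structure: a Hopf algebra `H` over `K` together with
generators `x, y, z` satisfying the defining relations of `H₈`, such that
`1, x, y, xy, z, xz, yz, xyz` is a linear basis, with the prescribed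
comultiplication, counit and antipode values. -/
structure KPAlg (K : Type*) (H : Type*) [Field K] [Ring H] [HopfAlgebra K H] where
  x : H
  y : H
  z : H
  basis_indep : LinearIndependent K
    ![(1 : H), x, y, x*y, z, x*z, y*z, x*y*z]
  basis_span : Submodule.span K
    (Set.range ![(1 : H), x, y, x*y, z, x*z, y*z, x*y*z]) = ⊤
  x_sq : x^2 = 1
  y_sq : y^2 = 1
  xy_comm : x*y = y*x
  zx : z*x = y*z
  zy : z*y = x*z
  z_sq : z^2 = (2:K)⁻¹ • (1 + x + y - x*y)
  comul_x : comul (R := K) x = x ⊗ₜ[K] x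
  comul_y : comul (R := K) y = y ⊗ₜ[K] y
  comul_z : comul (R := K) z =
    (2:K)⁻¹ • (z ⊗ₜ[K] z + z ⊗ₜ[K] (x*z) + (y*z) ⊗ₜ[K] z - (y*z) ⊗ₜ[K] (x*z))
  counit_x : counit (R := K) x = 1
  counit_y : counit (R := K) y = 1
  counit_z : counit (R := K) z = 1
  antipode_x : HopfAlgebra.antipode (R := K) x = x
  antipode_y : HopfAlgebra.antipode (R := K) y = y
  antipode_z : HopfAlgebra.antipode (R := K) z = z

end


open TensorProduct Coalgebra

noncomputable section

variable (K : Type*) (H : Type*) [Field K] [Ring H] [HopfAlgebra K H]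

/-- The data of a candidate Yetter–Drinfeld module over `H`: a `K`-bilinear
action of `H` and a `K`-linear coaction. -/
structure PreYD (M : Type*) [AddCommGroup M] [Module K M] where
  act : H →ₗ[K] M →ₗ[K] M
  coact : M →ₗ[K] H ⊗[K] M

namespace PreYD

variable {K H}
variable {M : Type*} [AddCommGroup M] [Module K M]
variable {N : Type*} [AddCommGroup N] [Module K N]

/-- The Yetter–Drinfeld compatibility map `h ⊗ m ↦ h₍₁₎ m₍₋₁₎ S(h₍₃₎) ⊗ h₍₂₎ · m₍₀₎`. -/
def ydRHS (P : PreYD K H M) : H ⊗[K] M →ₗ[K] H ⊗[K] M :=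
  let Δ : H →ₗ[K] H ⊗[K] H := comul (R := K)
  let S : H →ₗ[K] H := HopfAlgebra.antipode (R := K)
  let Δ₂ : H →ₗ[K] H ⊗[K] (H ⊗[K] H) :=
    (TensorProduct.map LinearMap.id Δ) ∘ₗ Δ
  -- h₁ ⊗ (h₂ ⊗ h₃) ↦ (h₁ ⊗ h₃) ⊗ h₂
  let e1 : H ⊗[K] (H ⊗[K] H) →ₗ[K] (H ⊗[K] H) ⊗[K] H :=
    (TensorProduct.assoc K H H H).symm.toLinearMap ∘ₗ
      (TensorProduct.map LinearMap.id (TensorProduct.comm K H H).toLinearMap)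
  -- (h₁ ⊗ h₃) ⊗ g ↦ h₁ * g * S h₃
  let mulFinal : (H ⊗[K] H) ⊗[K] H →ₗ[K] H :=
    (LinearMap.mul' K H) ∘ₗ
    (TensorProduct.map LinearMap.id (LinearMap.mul' K H)) ∘ₗ
    (TensorProduct.map LinearMap.id (TensorProduct.comm K H H).toLinearMap) ∘ₗ
    (TensorProduct.assoc K H H H).toLinearMap ∘ₗ
    (TensorProduct.map (TensorProduct.map LinearMap.id S) LinearMap.id)
  (TensorProduct.map mulFinal (TensorProduct.lift P.act)) ∘ₗ
    (TensorProduct.tensorTensorTensorComm K (H ⊗[K] H) H H M).toLinearMap ∘ₗ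
    (TensorProduct.map e1 LinearMap.id) ∘ₗ
    (TensorProduct.map Δ₂ P.coact)

/-- The axioms making a `PreYD` a genuine Yetter–Drinfeld module: `M` is a left
`H`-module, a left `H`-comodule, and the Yetter–Drinfeld compatibility holds. -/
def IsYD (P : PreYD K H M) : Prop :=
  (∀ m : M, P.act 1 m = m) ∧
  (∀ g h : H, ∀ m : M, P.act (g * h) m = P.act g (P.act h m)) ∧
  (∀ m : M, (TensorProduct.assoc K H H M)
      ((TensorProduct.map (comul (R := K)) LinearMap.id) (P.coact m)) =
    (TensorProduct.map LinearMap.id P.coact) (P.coact m)) ∧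
  (∀ m : M, (TensorProduct.lid K M)
      ((TensorProduct.map (counit (R := K)) LinearMap.id) (P.coact m)) = m) ∧
  (∀ (h : H) (m : M), P.coact (P.act h m) = P.ydRHS (h ⊗ₜ[K] m))

/-- Isomorphism of Yetter–Drinfeld module data: a linear equivalence commuting
with the actions and the coactions. -/
def Equiv (P : PreYD K H M) (Q : PreYD K H N) : Prop :=
  ∃ f : M ≃ₗ[K] N,
    (∀ (h : H) (m : M), f (P.act h m) = Q.act h (f m)) ∧
    (∀ m : M, Q.coact (f m) =
      (TensorProduct.map LinearMap.id (f : M →ₗ[K] N)) (P.coact m))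

/-- A `K`-subspace which is both an `H`-submodule and an `H`-subcomodule. -/
def IsSubYD (P : PreYD K H M) (S : Submodule K M) : Prop :=
  (∀ h : H, ∀ m ∈ S, P.act h m ∈ S) ∧
  (∀ m ∈ S, P.coact m ∈
    LinearMap.range (TensorProduct.map (LinearMap.id : H →ₗ[K] H) S.subtype))

/-- A Yetter–Drinfeld module is simple if it is nonzero and has no nonzero
proper Yetter–Drinfeld submodule. -/
def IsSimple (P : PreYD K H M) : Prop :=
  (∃ m : M, m ≠ 0) ∧
  ∀ S : Submodule K M, P.IsSubYD S → S = ⊥ ∨ S = ⊤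

/-- The braiding `c(v ⊗ w) = v₍₋₁₎ · w ⊗ v₍₀₎` of a Yetter–Drinfeld module. -/
def braiding (P : PreYD K H M) : M ⊗[K] M →ₗ[K] M ⊗[K] M :=
  (TensorProduct.map (TensorProduct.lift P.act) LinearMap.id) ∘ₗ
  (TensorProduct.assoc K H M M).symm.toLinearMap ∘ₗ
  (TensorProduct.map LinearMap.id (TensorProduct.comm K M M).toLinearMap) ∘ₗ
  (TensorProduct.assoc K H M M).toLinearMap ∘ₗ
  (TensorProduct.map P.coact LinearMap.id)

end PreYD

end

noncomputable section

namespace KPAlg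

variable {K : Type*} {H : Type*} [Field K] [Ring H] [HopfAlgebra K H]

/-- `f₀₀ = (1/4)(1+x)(1+y)`. -/
def f00 (P : KPAlg K H) : H := (4:K)⁻¹ • ((1 + P.x) * (1 + P.y))
/-- `f₁₀ = (1/4)(1-x)(1+y)`. -/
def f10 (P : KPAlg K H) : H := (4:K)⁻¹ • ((1 - P.x) * (1 + P.y))
/-- `f₀₁ = (1/4)(1+x)(1-y)`. -/
def f01 (P : KPAlg K H) : H := (4:K)⁻¹ • ((1 + P.x) * (1 - P.y))
/-- `f₁₁ = (1/4)(1-x)(1-y)`. -/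
def f11 (P : KPAlg K H) : H := (4:K)⁻¹ • ((1 - P.x) * (1 - P.y))

/-- `w = (f₀₀ + √i f₁₀ + (1/√i) f₀₁ + i f₁₁) z`. -/
def wEl (P : KPAlg K H) (i sqi : K) : H :=
  (P.f00 + sqi • P.f10 + sqi⁻¹ • P.f01 + i • P.f11) * P.z

section Chars

variable (P : KPAlg K H) (i : K)

/-- The one-dimensional Yetter–Drinfeld module data `M⟨b,g⟩`:
`x·v = b²v`, `y·v = b²v`, `z·v = bv`, `ρ(v) = g ⊗ v`. -/
def IsM1 (b : K) (g : H) (Q : PreYD K H K) : Prop :=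
  (∀ v : K, Q.act P.x v = b^2 * v) ∧
  (∀ v : K, Q.act P.y v = b^2 * v) ∧
  (∀ v : K, Q.act P.z v = b * v) ∧
  (∀ v : K, Q.coact v = g ⊗ₜ[K] v)

/-- Basis vector `(1,0)` of `K × K`. -/
def E1 : K × K := (1, 0)
/-- Basis vector `(0,1)` of `K × K`. -/
def E2 : K × K := (0, 1)

/-- The two-dimensional Yetter–Drinfeld module data `M⟨(1,xy)⟩`. -/
def IsM1xy (Q : PreYD K H (K × K)) : Prop :=
  Q.coact E1 = (1 : H) ⊗ₜ[K] E1 ∧ Q.coact E2 = (P.x * P.y) ⊗ₜ[K] E2 ∧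
  Q.act P.x E1 = -E1 ∧ Q.act P.x E2 = -E2 ∧
  Q.act P.y E1 = -E1 ∧ Q.act P.y E2 = -E2 ∧
  Q.act P.z E1 = i • E2 ∧ Q.act P.z E2 = i • E1

/-- The two-dimensional Yetter–Drinfeld module data `M⟨(x,y)⟩`. -/
def IsMxy (Q : PreYD K H (K × K)) : Prop :=
  Q.coact E1 = P.x ⊗ₜ[K] E1 ∧ Q.coact E2 = P.y ⊗ₜ[K] E2 ∧
  Q.act P.x E1 = E1 ∧ Q.act P.x E2 = E2 ∧
  Q.act P.y E1 = E1 ∧ Q.act P.y E2 = E2 ∧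
  Q.act P.z E1 = E2 ∧ Q.act P.z E2 = E1

/-- The two-dimensional Yetter–Drinfeld module data `M⟨(g₁,g₂)⟩`. -/
def IsMg (g₁ g₂ : H) (Q : PreYD K H (K × K)) : Prop :=
  Q.coact E1 = g₁ ⊗ₜ[K] E1 ∧ Q.coact E2 = g₂ ⊗ₜ[K] E2 ∧
  Q.act P.x E1 = E1 ∧ Q.act P.y E1 = -E1 ∧ Q.act P.z E1 = E2 ∧
  Q.act P.x E2 = -E2 ∧ Q.act P.y E2 = E2 ∧ Q.act P.z E2 = E1

/-- The two-dimensional Yetter–Drinfeld module data `W^{b₁,b₂}` in the basis `w₁, w₂`. -/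
def IsW (b₁ b₂ : K) (Q : PreYD K H (K × K)) : Prop :=
  Q.act P.x E1 = (i * b₁) • E2 ∧ Q.act P.x E2 = (-(i * b₁)) • E1 ∧
  Q.act P.y E1 = (i * b₁) • E2 ∧ Q.act P.y E2 = (-(i * b₁)) • E1 ∧
  Q.act P.z E1 = ((1 - i * b₁) * b₂ * (2:K)⁻¹) • (E1 - E2) ∧
  Q.act P.z E2 = ((1 - i * b₁) * b₂ * (2:K)⁻¹) • (E1 + E2) ∧
  Q.coact E1 = ((2:K)⁻¹ • ((1 + P.y) * P.z)) ⊗ₜ[K] E1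
      + ((2:K)⁻¹ • ((1 - P.y) * P.z)) ⊗ₜ[K] E2 ∧
  Q.coact E2 = ((2:K)⁻¹ • (P.x * (1 + P.y) * P.z)) ⊗ₜ[K] E2
      + ((2:K)⁻¹ • (P.x * (1 - P.y) * P.z)) ⊗ₜ[K] E1

/-- The two-dimensional Yetter–Drinfeld module data `W^{b₁,b₂}` in the basis `p₁, p₂`. -/
def IsWp (b₁ b₂ : K) (Q : PreYD K H (K × K)) : Prop :=
  Q.act P.x E1 = E1 ∧ Q.act P.y E1 = E1 ∧ Q.act P.z E1 = b₂ • E1 ∧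
  Q.act P.x E2 = -E2 ∧ Q.act P.y E2 = -E2 ∧ Q.act P.z E2 = (-(i * b₁ * b₂)) • E2 ∧
  Q.coact E1 = ((P.f00 - (i * b₁) • P.f11) * P.z) ⊗ₜ[K] E1
      + ((P.f10 + (i * b₁) • P.f01) * P.z) ⊗ₜ[K] E2 ∧
  Q.coact E2 = ((P.f00 + (i * b₁) • P.f11) * P.z) ⊗ₜ[K] E2
      + ((P.f10 - (i * b₁) • P.f01) * P.z) ⊗ₜ[K] E1

/-- The two-dimensional Yetter–Drinfeld module data `W₁ᵃ`. -/
def IsW1a (sqi a : K) (Q : PreYD K H (K × K)) : Prop :=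
  Q.act P.x E1 = -E1 ∧ Q.act P.y E1 = E1 ∧
  Q.act P.z E1 = ((2:K)⁻¹ * (1 - i) * (a + 1)) • E2 ∧
  Q.act P.x E2 = E2 ∧ Q.act P.y E2 = -E2 ∧
  Q.act P.z E2 = ((2:K)⁻¹ * (1 + i) * (a + 1)) • E1 ∧
  Q.coact E1 = ((2:K)⁻¹ • ((P.x + P.y) * P.wEl i sqi)) ⊗ₜ[K] E1
      + (((2:K)⁻¹ * sqi) • ((P.x - P.y) * P.wEl i sqi)) ⊗ₜ[K] E2 ∧
  Q.coact E2 = ((2:K)⁻¹ • ((1 + P.x * P.y) * P.wEl i sqi)) ⊗ₜ[K] E2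
      + (((2:K)⁻¹ * sqi) • ((1 - P.x * P.y) * P.wEl i sqi)) ⊗ₜ[K] E1

/-- The two-dimensional Yetter–Drinfeld module data `W₂ᵃ`. -/
def IsW2a (sqi a : K) (Q : PreYD K H (K × K)) : Prop :=
  Q.act P.x E1 = E1 ∧ Q.act P.y E1 = -E1 ∧
  Q.act P.z E1 = ((2:K)⁻¹ * (1 - i) * (a + 1)) • E2 ∧
  Q.act P.x E2 = -E2 ∧ Q.act P.y E2 = E2 ∧
  Q.act P.z E2 = ((2:K)⁻¹ * (1 + i) * (a + 1)) • E1 ∧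
  Q.coact E1 = ((2:K)⁻¹ • ((P.x + P.y) * P.wEl i sqi)) ⊗ₜ[K] E1
      + (((2:K)⁻¹ * sqi) • ((P.x - P.y) * P.wEl i sqi)) ⊗ₜ[K] E2 ∧
  Q.coact E2 = ((2:K)⁻¹ • ((1 + P.x * P.y) * P.wEl i sqi)) ⊗ₜ[K] E2
      + (((2:K)⁻¹ * sqi) • ((1 - P.x * P.y) * P.wEl i sqi)) ⊗ₜ[K] E1

end Chars

end KPAlg

/-- `Q` is the direct sum of the Yetter–Drinfeld module data `Q₁` and `Q₂`,
with componentwise action and coaction. -/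
def IsProdYD {K H : Type*} [Field K] [Ring H] [HopfAlgebra K H]
    {M₁ M₂ : Type*} [AddCommGroup M₁] [Module K M₁] [AddCommGroup M₂] [Module K M₂]
    (Q₁ : PreYD K H M₁) (Q₂ : PreYD K H M₂) (Q : PreYD K H (M₁ × M₂)) : Prop :=
  (∀ (h : H) (m₁ : M₁) (m₂ : M₂), Q.act h (m₁, m₂) = (Q₁.act h m₁, Q₂.act h m₂)) ∧
  (∀ (m₁ : M₁) (m₂ : M₂), Q.coact (m₁, m₂) =
    (TensorProduct.map (LinearMap.id (R := K) (M := H)) (LinearMap.inl K M₁ M₂)) (Q₁.coact m₁) +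
    (TensorProduct.map LinearMap.id (LinearMap.inr K M₁ M₂)) (Q₂.coact m₂))

end

open TensorProduct CategoryTheory MonoidalCategory

noncomputable section

universe u

variable (K : Type u) [Field K] (V : Type u) [AddCommGroup V] [Module K V]

/-- The `n`-th tensor power of `V` (normalized with a tensor-unit factor on the left),
as an object of `ModuleCat K`. -/
def TP : ℕ → ModuleCat.{u} K
  | 0 => ModuleCat.of K K
  | n+1 => TP n ⊗ ModuleCat.of K V

variable {K V}

/-- The braiding `c` applied in tensor positions `(k, k+1)` of the `n`-th tensor power
(acting on the `k`-th and `(k+1)`-st copies of `V`); the identity when `k = 0` or `k ≥ n`. -/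
def ck (c : V ⊗[K] V →ₗ[K] V ⊗[K] V) : (n k : ℕ) → (TP K V n ⟶ TP K V n)
  | 0, _ => 𝟙 _
  | 1, _ => 𝟙 _
  | n+2, k =>
    if k = n+1 then
      (α_ (TP K V n) (ModuleCat.of K V) (ModuleCat.of K V)).hom ≫
        ((TP K V n) ◁ (ModuleCat.ofHom c)) ≫
        (α_ (TP K V n) (ModuleCat.of K V) (ModuleCat.of K V)).inv
    else (ck c (n+1) k) ▷ (ModuleCat.of K V)

/-- The partial quantum symmetrizer `S_{j,1} = id + c_j + c_j c_{j-1} + ⋯ + c_j ⋯ c_1`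
on the `n`-th tensor power (for `j = 0` it is the identity). -/
def Sfrag (c : V ⊗[K] V →ₗ[K] V ⊗[K] V) (n : ℕ) : ℕ → (TP K V n ⟶ TP K V n)
  | 0 => 𝟙 _
  | j+1 => 𝟙 _ + (Sfrag c n j ≫ ck c n (j+1))

/-- The quantum symmetrizer `S_n` on the `n`-th tensor power:
`S_1 = id`, `S_n = (S_{n-1} ⊗ id) ∘ S_{n-1,1}`. -/
def Sn (c : V ⊗[K] V →ₗ[K] V ⊗[K] V) : (n : ℕ) → (TP K V n ⟶ TP K V n)
  | 0 => 𝟙 _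
  | 1 => 𝟙 _
  | n+2 => Sfrag c (n+2) (n+1) ≫ ((Sn c (n+1)) ▷ (ModuleCat.of K V))

/-- The rank of the `n`-th graded component `V^{⊗n}/ker S_n` of the Nichols algebra. -/
def nicholsDegRank (c : V ⊗[K] V →ₗ[K] V ⊗[K] V) (n : ℕ) : Cardinal :=
  Module.rank K (↥(TP K V n) ⧸ LinearMap.ker (Sn c n).hom)

/-- The canonical embedding of the `n`-th tensor power into the tensor algebra. -/
def toTA : (n : ℕ) → (↥(TP K V n) →ₗ[K] TensorAlgebra K V)
  | 0 => Algebra.linearMap K (TensorAlgebra K V)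
  | n+1 => TensorProduct.lift
      (((LinearMap.mul K (TensorAlgebra K V)).comp (toTA n)).compl₂
        (TensorAlgebra.ι K (M := V)))

/-- The Nichols algebra of the braided vector space `(V, c)`: the quotient of the
tensor algebra `T(V)` by the (ideal generated by the) kernels of the quantum
symmetrizers. -/
def NicholsAlgebra (c : V ⊗[K] V →ₗ[K] V ⊗[K] V) : Type u :=
  RingQuot (fun a b : TensorAlgebra K V =>
    (∃ n, 2 ≤ n ∧ ∃ t ∈ LinearMap.ker (Sn c n).hom, toTA n t = a) ∧ b = 0)

instance (c : V ⊗[K] V →ₗ[K] V ⊗[K] V) : Ring (NicholsAlgebra c) := by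
  unfold NicholsAlgebra; infer_instance

instance (c : V ⊗[K] V →ₗ[K] V ⊗[K] V) : Algebra K (NicholsAlgebra c) := by
  unfold NicholsAlgebra; infer_instance
/-- The element `(w₁ ⊗ w₂)^{⊗n}` of the `2n`-th tensor power. -/
def welt (w1 w2 : V) : (n : ℕ) → ↥(TP K V (2*n))
  | 0 => (1 : K)
  | n+1 => (welt w1 w2 n ⊗ₜ[K] w1) ⊗ₜ[K] w2

end


noncomputable section NicholsAux

open TensorProduct CategoryTheory MonoidalCategory Polynomial

universe u

lemma tmK {K : Type*} [Field K] (a b : K) : a ⊗ₜ[K] b = (a*b) • ((1:K) ⊗ₜ[K] (1:K)) := by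
  have h1 : a ⊗ₜ[K] b = a • ((1:K) ⊗ₜ[K] b) := by rw [smul_tmul', smul_eq_mul, mul_one]
  have h2 : (1:K) ⊗ₜ[K] b = b • ((1:K) ⊗ₜ[K] (1:K)) := by
    rw [← tmul_smul, smul_eq_mul, mul_one]
  rw [h1, h2, smul_smul]

lemma braid_eq {K H : Type*} [Field K] [Ring H] [HopfAlgebra K H]
    (Q : PreYD K H K) (g : H) (lam : K)
    (hg : ∀ w : K, Q.act g w = lam * w) (hco : ∀ v : K, Q.coact v = g ⊗ₜ[K] v) :
    Q.braiding = lam • LinearMap.id := by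
  apply TensorProduct.ext'
  intro v w
  simp only [PreYD.braiding, LinearMap.comp_apply, TensorProduct.map_tmul,
    LinearMap.id_apply, hco, TensorProduct.assoc_tmul, LinearEquiv.coe_coe,
    TensorProduct.comm_tmul, TensorProduct.assoc_symm_tmul, TensorProduct.lift.tmul,
    hg, LinearMap.smul_apply]
  rw [tmK (lam * w) v, tmK v w, smul_smul]
  ring_nf

variable {K : Type u} [Field K]

lemma asHom_smul_id (lam : K) :
    ModuleCat.ofHom (lam • (LinearMap.id : K ⊗[K] K →ₗ[K] K ⊗[K] K)) =
      lam • 𝟙 ((ModuleCat.of K K ⊗ ModuleCat.of K K : ModuleCat K)) := rfl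

lemma ck_active (lam : K) : ∀ n k, 1 ≤ k → k + 1 ≤ n →
    ck (lam • (LinearMap.id : K ⊗[K] K →ₗ[K] K ⊗[K] K)) n k = lam • 𝟙 (TP K K n) := by
  intro n
  induction n with
  | zero => intro k h1 h2; omega
  | succ m ih =>
    intro k h1 h2
    match m, ih with
    | 0, _ => omega
    | m+1, ih =>
      show ck _ (m+2) k = _
      rw [ck]
      by_cases hk : k = m+1
      · erw [if_pos hk, asHom_smul_id, MonoidalLinear.whiskerLeft_smul,
          MonoidalCategory.whiskerLeft_id]
        show (α_ (TP K K m) (ModuleCat.of K K) (ModuleCat.of K K)).hom ≫ (lam • 𝟙 _) ≫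
          (α_ (TP K K m) (ModuleCat.of K K) (ModuleCat.of K K)).inv =
          lam • 𝟙 ((TP K K m ⊗ ModuleCat.of K K) ⊗ ModuleCat.of K K)
        simp only [Linear.smul_comp, Linear.comp_smul, Category.id_comp, Iso.hom_inv_id]
      · erw [if_neg hk, ih k h1 (by omega), MonoidalLinear.smul_whiskerRight,
          MonoidalCategory.id_whiskerRight]
        rfl

lemma Sfrag_smul (lam : K) (n : ℕ) : ∀ j, j + 1 ≤ n →
    Sfrag (lam • (LinearMap.id : K ⊗[K] K →ₗ[K] K ⊗[K] K)) n j =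
      (∑ i ∈ Finset.range (j+1), lam ^ i) • 𝟙 (TP K K n) := by
  intro j
  induction j with
  | zero => intro _; simp [Sfrag]
  | succ j ih =>
    intro hj
    rw [Sfrag, ih (by omega), ck_active lam n (j+1) (by omega) hj,
      Linear.smul_comp, Linear.comp_smul, Category.comp_id, smul_smul]
    nth_rewrite 1 [← one_smul K (𝟙 (TP K K n))]
    rw [← add_smul]
    congr 1
    rw [geom_sum_succ, geom_sum_succ, geom_sum_succ]
    ring

lemma Sn_one : ∀ n, Sn ((1:K) • (LinearMap.id : K ⊗[K] K →ₗ[K] K ⊗[K] K)) n =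
    ((Nat.factorial n : ℕ) : K) • 𝟙 (TP K K n) := by
  intro n
  induction n with
  | zero => simp [Sn]
  | succ m ih =>
    match m, ih with
    | 0, _ => simp [Sn]
    | m+1, ih =>
      rw [Sn, ih, Sfrag_smul 1 (m+2) (m+1) (by omega)]
      simp only [one_pow, Finset.sum_const, Finset.card_range, nsmul_eq_mul, mul_one]
      rw [MonoidalLinear.smul_whiskerRight, MonoidalCategory.id_whiskerRight,
        show 𝟙 (TP K K (m+1) ⊗ ModuleCat.of K K) = 𝟙 (TP K K (m+2)) from rfl]
      erw [Linear.smul_comp,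
        Category.id_comp, smul_smul]
      congr 1
      push_cast [Nat.factorial_succ]
      ring

lemma Sn_two (lam : K) :
    Sn (lam • (LinearMap.id : K ⊗[K] K →ₗ[K] K ⊗[K] K)) 2 = (1 + lam) • 𝟙 (TP K K 2) := by
  rw [show (2:ℕ) = 0 + 2 from rfl, Sn, Sfrag_smul lam 2 1 (by omega)]
  rw [show Sn (lam • (LinearMap.id : K ⊗[K] K →ₗ[K] K ⊗[K] K)) (0+1) = 𝟙 _ from rfl,
    MonoidalCategory.id_whiskerRight,
    show 𝟙 (TP K K 1 ⊗ ModuleCat.of K K) = 𝟙 (TP K K 2) from rfl,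
    Category.comp_id]
  congr 1
  simp [Finset.sum_range_succ]

lemma ker_Sn_one [CharZero K] (n : ℕ) :
    LinearMap.ker (Sn ((1:K) • (LinearMap.id : K ⊗[K] K →ₗ[K] K ⊗[K] K)) n).hom = ⊥ := by
  rw [Sn_one n, ModuleCat.hom_smul, ModuleCat.hom_id]
  rw [LinearMap.ker_smul _ _ (Nat.cast_ne_zero.mpr (Nat.factorial_ne_zero n))]
  exact LinearMap.ker_id

def toPolyHom : TensorAlgebra K K →ₐ[K] K[X] :=
  TensorAlgebra.lift K (LinearMap.toSpanSingleton K K[X] X)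

lemma toPolyHom_ι (v : K) : toPolyHom (TensorAlgebra.ι K v) = v • Polynomial.X := by
  unfold toPolyHom
  rw [TensorAlgebra.lift_ι_apply, LinearMap.toSpanSingleton_apply]

lemma toTA_succ (n : ℕ) (s : ↥(TP K K n)) (v : K) :
    toTA (n+1) (s ⊗ₜ[K] v) = toTA n s * TensorAlgebra.ι K v := by
  rfl

lemma X_pow_dvd : ∀ (n : ℕ) (t : ↥(TP K K n)), (X : K[X]) ^ n ∣ toPolyHom (toTA n t) := by
  intro n
  induction n with
  | zero => intro t; simp
  | succ n ih =>
    intro t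
    refine TensorProduct.induction_on t ?_ ?_ ?_
    · erw [map_zero]; exact dvd_zero _
    · intro s v
      rw [toTA_succ, map_mul, pow_succ]
      refine mul_dvd_mul (ih s) ?_
      rw [toPolyHom_ι, Polynomial.smul_eq_C_mul]
      exact dvd_mul_left _ _
    · intro a b ha hb
      erw [map_add, map_add]
      exact dvd_add ha hb

lemma toTA_two : toTA 2 ((((1:K) ⊗ₜ[K] (1:K)) ⊗ₜ[K] (1:K)) : ↥(TP K K 2)) =
    TensorAlgebra.ι K (1:K) * TensorAlgebra.ι K (1:K) := by
  erw [toTA_succ, toTA_succ]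
  simp only [toTA]
  have h : (Algebra.linearMap K (TensorAlgebra K K)) (1 : K) = 1 :=
    map_one (algebraMap K (TensorAlgebra K K))
  erw [h, one_mul]

abbrev nrel (c : K ⊗[K] K →ₗ[K] K ⊗[K] K) :
    TensorAlgebra K K → TensorAlgebra K K → Prop :=
  fun a b => (∃ n, 2 ≤ n ∧ ∃ t ∈ LinearMap.ker (Sn c n).hom, toTA n t = a) ∧ b = 0

def taPoly : TensorAlgebra K K ≃ₐ[K] K[X] :=
  AlgEquiv.ofAlgHom
    toPolyHom
    (Polynomial.aeval (TensorAlgebra.ι K (1:K)))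
    (by
      apply Polynomial.algHom_ext
      simp [toPolyHom])
    (by
      apply TensorAlgebra.hom_ext
      apply LinearMap.ext; intro v
      simp only [toPolyHom, AlgHom.comp_toLinearMap, LinearMap.comp_apply,
        AlgHom.toLinearMap_apply, TensorAlgebra.lift_ι_apply,
        LinearMap.toSpanSingleton_apply, AlgHom.id_comp]
      rw [map_smul, Polynomial.aeval_X, ← map_smul, smul_eq_mul, mul_one]
      rfl)

section OneCase
variable [CharZero K]

lemma nrel_one_eq {a b : TensorAlgebra K K}
    (h : nrel ((1:K) • (LinearMap.id : K ⊗[K] K →ₗ[K] K ⊗[K] K)) a b) : a = b := by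
  obtain ⟨⟨n, hn, t, ht, rfl⟩, rfl⟩ := h
  rw [ker_Sn_one n, Submodule.mem_bot] at ht
  rw [ht, map_zero]

def nicholsOne :
    NicholsAlgebra ((1:K) • (LinearMap.id : K ⊗[K] K →ₗ[K] K ⊗[K] K)) ≃ₐ[K] K[X] := by
  refine AlgEquiv.trans (AlgEquiv.ofAlgHom
    (RingQuot.liftAlgHom K ⟨AlgHom.id K (TensorAlgebra K K), fun {a b} h => nrel_one_eq h⟩)
    (RingQuot.mkAlgHom K _)
    ?_ ?_) taPoly
  · apply AlgHom.ext; intro a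
    exact RingQuot.liftAlgHom_mkAlgHom_apply (S := K) (AlgHom.id K (TensorAlgebra K K))
      (fun {a b} h => nrel_one_eq h) a
  · apply RingQuot.ringQuot_ext'
    apply AlgHom.ext; intro a
    show RingQuot.mkAlgHom K _ (((RingQuot.liftAlgHom K) ⟨AlgHom.id K (TensorAlgebra K K),
      fun {a b} h => nrel_one_eq h⟩) ((RingQuot.mkAlgHom K _) a)) = _
    rw [RingQuot.liftAlgHom_mkAlgHom_apply]
    rfl

end OneCase

section NegCase

lemma Sn_neg_two :
    Sn ((-1:K) • (LinearMap.id : K ⊗[K] K →ₗ[K] K ⊗[K] K)) 2 = 0 := by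
  rw [Sn_two]
  simp

lemma nrel_neg_eq {a b : TensorAlgebra K K}
    (h : nrel ((-1:K) • (LinearMap.id : K ⊗[K] K →ₗ[K] K ⊗[K] K)) a b) :
    ((Ideal.Quotient.mkₐ K (Ideal.span {(X:K[X])^2})).comp toPolyHom) a =
    ((Ideal.Quotient.mkₐ K (Ideal.span {(X:K[X])^2})).comp toPolyHom) b := by
  obtain ⟨⟨n, hn, t, _, rfl⟩, rfl⟩ := h
  rw [map_zero, AlgHom.comp_apply, Ideal.Quotient.mkₐ_eq_mk, Ideal.Quotient.eq_zero_iff_mem,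
    Ideal.mem_span_singleton]
  exact dvd_trans (pow_dvd_pow X hn) (X_pow_dvd n t)

def nicholsNeg :
    NicholsAlgebra ((-1:K) • (LinearMap.id : K ⊗[K] K →ₗ[K] K ⊗[K] K)) ≃ₐ[K]
      (K[X] ⧸ Ideal.span {(X:K[X])^2}) := by
  have hp2 : (RingQuot.mkAlgHom K (nrel ((-1:K) • (LinearMap.id : K ⊗[K] K →ₗ[K] K ⊗[K] K)))
      (TensorAlgebra.ι K 1)) ^ 2 = 0 := by
    rw [sq, ← map_mul, ← toTA_two]
    have : nrel ((-1:K) • (LinearMap.id : K ⊗[K] K →ₗ[K] K ⊗[K] K))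
        (toTA 2 ((((1:K) ⊗ₜ[K] (1:K)) ⊗ₜ[K] (1:K)) : ↥(TP K K 2))) 0 :=
      ⟨⟨2, le_refl 2, _, by erw [LinearMap.mem_ker, Sn_neg_two]; rfl, rfl⟩, rfl⟩
    rw [RingQuot.mkAlgHom_rel K this, map_zero]
  refine AlgEquiv.ofAlgHom
    (RingQuot.liftAlgHom K ⟨(Ideal.Quotient.mkₐ K (Ideal.span {(X:K[X])^2})).comp toPolyHom,
      fun {a b} h => nrel_neg_eq h⟩)
    (Ideal.Quotient.liftₐ (Ideal.span {(X:K[X])^2})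
      (Polynomial.aeval (RingQuot.mkAlgHom K _ (TensorAlgebra.ι K 1)))
      ?_)
    ?_ ?_
  · intro a ha
    rw [Ideal.mem_span_singleton] at ha
    obtain ⟨q, rfl⟩ := ha
    erw [map_mul, map_pow, Polynomial.aeval_X, hp2, zero_mul]
  · apply Ideal.Quotient.algHom_ext
    apply Polynomial.algHom_ext
    simp only [AlgHom.comp_apply, Ideal.Quotient.mkₐ_eq_mk, Ideal.Quotient.liftₐ_apply,
      Ideal.Quotient.lift_mk, AlgHom.id_apply]
    erw [AlgHom.comp_apply, Ideal.Quotient.liftₐ_apply (I := Ideal.span {(X:K[X])^2}),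
      Ideal.Quotient.lift_mk (I := Ideal.span {(X:K[X])^2})]
    erw [Polynomial.aeval_X]
    have h1 := RingQuot.liftAlgHom_mkAlgHom_apply (S := K)
      ((Ideal.Quotient.mkₐ K (Ideal.span {(X:K[X])^2})).comp toPolyHom)
      (fun {a b} h => nrel_neg_eq h) (TensorAlgebra.ι K 1)
    refine h1.trans ?_
    rw [AlgHom.comp_apply, toPolyHom_ι, one_smul, Ideal.Quotient.mkₐ_eq_mk]
  · apply RingQuot.ringQuot_ext'
    apply TensorAlgebra.hom_ext
    apply LinearMap.ext; intro v
    simp only [LinearMap.comp_apply, AlgHom.toLinearMap_apply, AlgHom.comp_apply,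
      AlgHom.id_apply, RingQuot.liftAlgHom_mkAlgHom_apply, toPolyHom_ι,
      Ideal.Quotient.mkₐ_eq_mk, map_smul, Ideal.Quotient.liftₐ_apply, Ideal.Quotient.lift_mk]
    erw [AlgHom.comp_apply, AlgHom.comp_apply, RingQuot.liftAlgHom_mkAlgHom_apply,
      AlgHom.comp_apply, toPolyHom_ι, Ideal.Quotient.mkₐ_eq_mk, Ideal.Quotient.liftₐ_apply,
      Ideal.Quotient.lift_mk]
    have h2 : (TensorAlgebra.ι K v : TensorAlgebra K K) = v • TensorAlgebra.ι K (1:K) := by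
      rw [← map_smul, smul_eq_mul, mul_one]
    rw [h2]
    exact ((LinearMap.map_smul (Polynomial.aeval (RingQuot.mkAlgHom K
      (nrel ((-1:K) • (LinearMap.id : K ⊗[K] K →ₗ[K] K ⊗[K] K))) (TensorAlgebra.ι K (1:K)))).toLinearMap
      v X).trans
      (congrArg (v • ·) (Polynomial.aeval_X _))).trans (map_smul (RingQuot.mkAlgHom K
      (nrel ((-1:K) • (LinearMap.id : K ⊗[K] K →ₗ[K] K ⊗[K] K)))) v
      (TensorAlgebra.ι K (1:K))).symm

lemma rank_quot_X_sq :
    Module.rank K (K[X] ⧸ Ideal.span {(X:K[X])^2}) = 2 := by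
  have hne : ((X:K[X])^2) ≠ 0 := pow_ne_zero 2 Polynomial.X_ne_zero
  have hdim : (AdjoinRoot.powerBasis hne).dim = 2 := by
    rw [AdjoinRoot.powerBasis_dim]
    simp
  let b : Module.Basis (Fin 2) K (AdjoinRoot ((X:K[X])^2)) :=
    (AdjoinRoot.powerBasis hne).basis.reindex (finCongr hdim)
  let b' := b.reindex (Equiv.ulift.{u,0}).symm
  have h := Module.Basis.mk_eq_rank'' b'
  rw [Cardinal.mk_uLift, Cardinal.mk_fintype, Fintype.card_fin] at h
  simp only [Nat.cast_ofNat, Cardinal.lift_ofNat] at h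
  exact h.symm

end NegCase

end NicholsAux

noncomputable section

open TensorProduct

/-- For `(b,g) ∈ {(1,1),(-1,1),(1,xy),(-1,xy)}` the Nichols algebra
`B(M⟨b,g⟩)` is isomorphic to the polynomial algebra `K[p]`, in particular
infinite-dimensional; for `(b,g) ∈ {(i,x),(-i,x),(i,y),(-i,y)}` it is isomorphic
to `K[p]/(p²)`, in particular of dimension `2`. -/
theorem nichols_algebra_of_one_dimensional_yd_modules_over_H8
    {K H : Type*} [Field K] [CharZero K] [IsAlgClosed K]
    [Ring H] [HopfAlgebra K H] (P : KPAlg K H) (i : K) (hi : i ^ 2 = -1) :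
    (∀ p ∈ ({((1:K), (1:H)), (-1, 1), (1, P.x * P.y), (-1, P.x * P.y)} : Set (K × H)),
      ∀ Q : PreYD K H K, Q.IsYD → P.IsM1 p.1 p.2 Q →
        Nonempty (NicholsAlgebra Q.braiding ≃ₐ[K] Polynomial K) ∧
        ¬ Module.Finite K (NicholsAlgebra Q.braiding)) ∧
    (∀ p ∈ ({(i, P.x), (-i, P.x), (i, P.y), (-i, P.y)} : Set (K × H)),
      ∀ Q : PreYD K H K, Q.IsYD → P.IsM1 p.1 p.2 Q →
        Nonempty (NicholsAlgebra Q.braiding ≃ₐ[K]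
          (Polynomial K ⧸ Ideal.span {(Polynomial.X : Polynomial K) ^ 2})) ∧
        Module.rank K (NicholsAlgebra Q.braiding) = 2) := by
  constructor
  · rintro p hp Q hQ hM
    obtain ⟨hx, hy, hz, hco⟩ := hM
    obtain ⟨hone, hmul, -, -, -⟩ := hQ
    have hg : ∀ w : K, Q.act p.2 w = (1:K) * w := by
      simp only [Set.mem_insert_iff, Set.mem_singleton_iff] at hp
      rcases hp with rfl | rfl | rfl | rfl <;> intro w
      · rw [hone, one_mul]
      · rw [hone, one_mul]
      · rw [show ((((1:K), P.x * P.y) : K × H)).2 = P.x * P.y from rfl, hmul, hy, hx]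
        norm_num
      · rw [show ((((-1:K), P.x * P.y) : K × H)).2 = P.x * P.y from rfl, hmul, hy, hx]
        norm_num
    have hbr : Q.braiding = (1:K) • LinearMap.id := braid_eq Q p.2 1 hg hco
    rw [hbr]
    refine ⟨⟨nicholsOne⟩, ?_⟩
    intro hfin
    exact Polynomial.not_finite (Module.Finite.equiv (nicholsOne (K := K)).toLinearEquiv)
  · rintro p hp Q hQ hM
    obtain ⟨hx, hy, hz, hco⟩ := hM
    have hg : ∀ w : K, Q.act p.2 w = (-1:K) * w := by
      simp only [Set.mem_insert_iff, Set.mem_singleton_iff] at hp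
      rcases hp with rfl | rfl | rfl | rfl <;> intro w
      · rw [show (((i, P.x) : K × H)).2 = P.x from rfl, hx, show (((i, P.x) : K × H)).1 = i from rfl, hi]
      · rw [show (((-i, P.x) : K × H)).2 = P.x from rfl, hx,
          show (((-i, P.x) : K × H)).1 = -i from rfl, neg_sq, hi]
      · rw [show (((i, P.y) : K × H)).2 = P.y from rfl, hy, show (((i, P.y) : K × H)).1 = i from rfl, hi]
      · rw [show (((-i, P.y) : K × H)).2 = P.y from rfl, hy,
          show (((-i, P.y) : K × H)).1 = -i from rfl, neg_sq, hi]
    have hbr : Q.braiding = (-1:K) • LinearMap.id := braid_eq Q p.2 (-1) hg hco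
    rw [hbr]
    refine ⟨⟨nicholsNeg⟩, ?_⟩
    exact ((nicholsNeg (K := K)).toLinearEquiv.rank_eq).trans rank_quot_X_sq


end
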